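/- arXiv:1405.0680 — 2 statements merged into one kernel-verified Lean document; each statement's English description precedes it below -/
import Mathlib

section
/- Let Σ, Σ̂ ∈ ℝ^{p×p} be symmetric matrices with eigenvalues λ₁ ≥ … ≥ λ_p and λ̂₁ ≥ … ≥ λ̂_p respectively, fix j ∈ {1, …, p}, and assume δ := min(λ_{j−1} − λ_j, λ_j − λ_{j+1}) > 0 (with λ₀ := ∞, λ_{p+1} := −∞). If the unit vectors v, v̂ ∈ ℝ^p satisfy Σv = λ_j v and Σ̂v̂ = λ̂_j v̂, then (1 − (v̂ᵀv)²)^{1/2} ≤ 2 ‖Σ̂ − Σ‖_op / δ. -/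
open Matrix

noncomputable def frobNorm {m n : Type*} [Fintype m] [Fintype n] (A : Matrix m n ℝ) : ℝ :=
  Real.sqrt (∑ i, ∑ j, (A i j) ^ 2)

noncomputable def opNorm {p q : ℕ} (A : Matrix (Fin p) (Fin q) ℝ) : ℝ :=
  ‖LinearMap.toContinuousLinearMap (Matrix.toEuclideanLin A)‖

lemma opNorm_nonneg {p q : ℕ} (A : Matrix (Fin p) (Fin q) ℝ) : 0 ≤ opNorm A := norm_nonneg _

lemma normA {p q : ℕ} (A : Matrix (Fin p) (Fin q) ℝ) (x : Fin q → ℝ) :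
    Real.sqrt (∑ i, (A.mulVec x i) ^ 2) ≤ opNorm A * Real.sqrt (∑ i, (x i) ^ 2) := by
  set u : EuclideanSpace ℝ (Fin q) := (WithLp.equiv 2 _).symm x with hu
  have h1 : ‖LinearMap.toContinuousLinearMap (Matrix.toEuclideanLin A) u‖ ≤ opNorm A * ‖u‖ :=
    (LinearMap.toContinuousLinearMap (Matrix.toEuclideanLin A)).le_opNorm u
  have h2 : LinearMap.toContinuousLinearMap (Matrix.toEuclideanLin A) u
      = (WithLp.equiv 2 (Fin p → ℝ)).symm (A.mulVec x) := by
    simp [hu, WithLp.equiv_symm_apply, Matrix.toEuclideanLin_apply_piLp_toLp]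
  rw [h2] at h1
  have h3 : ‖(WithLp.equiv 2 (Fin p → ℝ)).symm (A.mulVec x)‖
      = Real.sqrt (∑ i, (A.mulVec x i) ^ 2) := by
    rw [EuclideanSpace.norm_eq]
    congr 1; apply Finset.sum_congr rfl; intro i _
    simp [WithLp.equiv_symm_apply, PiLp.toLp_apply, Real.norm_eq_abs, sq_abs]
  have h4 : ‖u‖ = Real.sqrt (∑ i, (x i) ^ 2) := by
    rw [hu, EuclideanSpace.norm_eq]
    congr 1; apply Finset.sum_congr rfl; intro i _
    simp [WithLp.equiv_symm_apply, PiLp.toLp_apply, Real.norm_eq_abs, sq_abs]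
  rw [h3, h4] at h1; exact h1

lemma dot_self_sq {p : ℕ} (x : Fin p → ℝ) : x ⬝ᵥ x = ∑ i, x i ^ 2 := by
  simp [dotProduct, sq]

lemma orthdot {p : ℕ} {Q : Matrix (Fin p) (Fin p) ℝ} (hQ : Qᵀ * Q = 1) (a b : Fin p → ℝ) :
    (Q *ᵥ a) ⬝ᵥ (Q *ᵥ b) = a ⬝ᵥ b := by
  rw [Matrix.dotProduct_mulVec, ← Matrix.mulVec_transpose, Matrix.mulVec_mulVec, hQ, Matrix.one_mulVec]

lemma coord_recover {p : ℕ} {Q : Matrix (Fin p) (Fin p) ℝ} (hQ : Qᵀ * Q = 1) (x : Fin p → ℝ) :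
    Q *ᵥ (Qᵀ *ᵥ x) = x := by
  rw [Matrix.mulVec_mulVec, mul_eq_one_comm.mp hQ, Matrix.one_mulVec]

lemma coordsum {p : ℕ} {Q : Matrix (Fin p) (Fin p) ℝ} (hQ : Qᵀ * Q = 1) (x : Fin p → ℝ) :
    ∑ i, (Qᵀ *ᵥ x) i ^ 2 = ∑ i, x i ^ 2 := by
  have h : Qᵀᵀ * Qᵀ = 1 := by rw [Matrix.transpose_transpose, mul_eq_one_comm.mp hQ]
  have := orthdot h x x
  rw [← dot_self_sq, ← dot_self_sq, this]

lemma coorddot {p : ℕ} {Q : Matrix (Fin p) (Fin p) ℝ} (hQ : Qᵀ * Q = 1) (x y : Fin p → ℝ) :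
    (Qᵀ *ᵥ x) ⬝ᵥ (Qᵀ *ᵥ y) = x ⬝ᵥ y := by
  have h : Qᵀᵀ * Qᵀ = 1 := by rw [Matrix.transpose_transpose, mul_eq_one_comm.mp hQ]
  have := orthdot h x y
  simpa only [Matrix.transpose_transpose] using this

lemma quadform {p : ℕ} {Q : Matrix (Fin p) (Fin p) ℝ} (hQ : Qᵀ * Q = 1) (d : Fin p → ℝ)
    (x : Fin p → ℝ) :
    x ⬝ᵥ ((Q * Matrix.diagonal d * Qᵀ) *ᵥ x) = ∑ i, d i * ((Qᵀ *ᵥ x) i) ^ 2 := by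
  have h1 : (Q * Matrix.diagonal d * Qᵀ) *ᵥ x
      = Q *ᵥ ((Matrix.diagonal d) *ᵥ (Qᵀ *ᵥ x)) := by
    rw [Matrix.mulVec_mulVec, Matrix.mulVec_mulVec]
  rw [h1, Matrix.dotProduct_mulVec, ← Matrix.mulVec_transpose]
  simp only [dotProduct, Matrix.mulVec_diagonal]
  apply Finset.sum_congr rfl; intro i _; ring

lemma coord_eig {p : ℕ} {Q : Matrix (Fin p) (Fin p) ℝ} (hQ : Qᵀ * Q = 1) (d : Fin p → ℝ)
    (x : Fin p → ℝ) :
    Qᵀ *ᵥ ((Q * Matrix.diagonal d * Qᵀ) *ᵥ x) = fun i => d i * (Qᵀ *ᵥ x) i := by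
  rw [Matrix.mulVec_mulVec]
  have h2 : Qᵀ * (Q * Matrix.diagonal d * Qᵀ) = Matrix.diagonal d * Qᵀ := by
    rw [Matrix.mul_assoc Q, ← Matrix.mul_assoc Qᵀ, hQ, Matrix.one_mul]
  rw [h2, ← Matrix.mulVec_mulVec]
  ext i; simp [Matrix.mulVec_diagonal]

lemma sum_eq_sum_image {p m : ℕ} (g : Fin m → Fin p) (hg : Function.Injective g)
    (f : Fin p → ℝ) (hf : ∀ i, (∀ k, g k ≠ i) → f i = 0) : ∑ i, f i = ∑ k, f (g k) := by
  have h := Finset.sum_image (s := Finset.univ) (g := g) (f := f) (fun a _ b _ hab => hg hab)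
  rw [← h]
  apply (Finset.sum_subset (Finset.subset_univ _) _).symm
  intro i _ hi
  apply hf
  intro k hk
  exact hi (Finset.mem_image.mpr ⟨k, Finset.mem_univ _, hk⟩)

lemma opNorm_neg {p q : ℕ} (A : Matrix (Fin p) (Fin q) ℝ) : opNorm (-A) = opNorm A := by
  unfold opNorm
  rw [map_neg, map_neg, norm_neg]

lemma opNorm_sub_comm {p q : ℕ} (A B : Matrix (Fin p) (Fin q) ℝ) :
    opNorm (A - B) = opNorm (B - A) := by
  rw [← neg_sub, opNorm_neg]

lemma dot_bound {p : ℕ} (A : Matrix (Fin p) (Fin p) ℝ) (x : Fin p → ℝ) :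
    |x ⬝ᵥ (A *ᵥ x)| ≤ opNorm A * ∑ i, x i ^ 2 := by
  set a := ∑ i, x i ^ 2 with ha
  set b := ∑ i, (A *ᵥ x) i ^ 2 with hb
  have ha0 : 0 ≤ a := Finset.sum_nonneg fun i _ => sq_nonneg _
  have hb0 : 0 ≤ b := Finset.sum_nonneg fun i _ => sq_nonneg _
  have cs : (x ⬝ᵥ (A *ᵥ x)) ^ 2 ≤ a * b := by
    rw [ha, hb]
    exact Finset.sum_mul_sq_le_sq_mul_sq _ _ _
  have h1 : |x ⬝ᵥ (A *ᵥ x)| ≤ Real.sqrt (a * b) := by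
    rw [← Real.sqrt_sq_eq_abs]
    exact Real.sqrt_le_sqrt cs
  have h2 : Real.sqrt (a * b) = Real.sqrt a * Real.sqrt b := Real.sqrt_mul ha0 _
  have h3 : Real.sqrt b ≤ opNorm A * Real.sqrt a := normA A x
  calc |x ⬝ᵥ (A *ᵥ x)| ≤ Real.sqrt a * Real.sqrt b := by rw [← h2]; exact h1
    _ ≤ Real.sqrt a * (opNorm A * Real.sqrt a) := by
        apply mul_le_mul_of_nonneg_left h3 (Real.sqrt_nonneg _)
    _ = opNorm A * (Real.sqrt a * Real.sqrt a) := by ring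
    _ = opNorm A * a := by rw [Real.mul_self_sqrt ha0]

lemma weyl_le (p j : ℕ) (hj1 : 1 ≤ j) (hjp : j ≤ p)
    (lam lamh : ℕ → ℝ)
    (hmono : ∀ i j, 1 ≤ i → i ≤ j → j ≤ p → lam j ≤ lam i)
    (hmonoh : ∀ i j, 1 ≤ i → i ≤ j → j ≤ p → lamh j ≤ lamh i)
    (S Sh : Matrix (Fin p) (Fin p) ℝ)
    (hSspec : ∃ Q : Matrix (Fin p) (Fin p) ℝ, Qᵀ * Q = 1 ∧
      S = Q * Matrix.diagonal (fun i : Fin p => lam (i.1 + 1)) * Qᵀ)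
    (hShspec : ∃ Q : Matrix (Fin p) (Fin p) ℝ, Qᵀ * Q = 1 ∧
      Sh = Q * Matrix.diagonal (fun i : Fin p => lamh (i.1 + 1)) * Qᵀ) :
    lam j ≤ lamh j + opNorm (Sh - S) := by
  obtain ⟨Q, hQ, hS⟩ := hSspec
  obtain ⟨Qh, hQh, hSh⟩ := hShspec
  -- the rectangular matrix whose kernel provides the test vector
  set M : Matrix (Fin (j - 1)) (Fin j) ℝ :=
    Matrix.of (fun k l => (Qhᵀ * Q) ⟨k.1, by omega⟩ ⟨l.1, by omega⟩) with hM
  have hnotinj : ¬ Function.Injective M.mulVecLin := by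
    intro h
    have := LinearMap.finrank_le_finrank_of_injective h
    rw [Module.finrank_fin_fun, Module.finrank_fin_fun] at this
    omega
  have hker : LinearMap.ker M.mulVecLin ≠ ⊥ := fun h => hnotinj (LinearMap.ker_eq_bot.mp h)
  obtain ⟨y, hyker, hy0⟩ := Submodule.exists_mem_ne_zero_of_ne_bot hker
  have hMy : M *ᵥ y = 0 := hyker
  set e : Fin p → ℝ := fun i => if h : i.1 < j then y ⟨i.1, h⟩ else 0 with he
  set x := Q *ᵥ e with hx
  have hQtx : Qᵀ *ᵥ x = e := by
    rw [hx, Matrix.mulVec_mulVec, hQ, Matrix.one_mulVec]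
  set z := Qhᵀ *ᵥ x with hz
  set n2 := ∑ i, e i ^ 2 with hn2def
  have hn2 : 0 < n2 := by
    obtain ⟨k, hk⟩ := Function.ne_iff.mp hy0
    apply Finset.sum_pos' (fun i _ => sq_nonneg _)
    refine ⟨⟨k.1, by omega⟩, Finset.mem_univ _, ?_⟩
    have : e ⟨k.1, by omega⟩ = y k := by
      rw [he]; simp only [dif_pos k.2]
    rw [this]
    have hk' : y k ≠ 0 := by simpa using hk
    exact (sq_nonneg _).lt_of_ne (Ne.symm (pow_ne_zero 2 hk'))
  have hzlow : ∀ i : Fin p, i.1 < j - 1 → z i = 0 := by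
    intro i hi
    have hzi : z = (Qhᵀ * Q) *ᵥ e := by rw [hz, hx, Matrix.mulVec_mulVec]
    set g : Fin j → Fin p := fun l => ⟨l.1, by omega⟩ with hg
    have hginj : Function.Injective g := fun a b hab =>
      Fin.ext (by simpa [hg] using congrArg Fin.val hab)
    have hsum : ∑ l, (Qhᵀ * Q) i l * e l = ∑ l : Fin j, (Qhᵀ * Q) i (g l) * e (g l) := by
      apply sum_eq_sum_image g hginj
      intro l hl
      have hnl : ¬ (l.1 < j) := by
        intro hlj
        exact hl ⟨l.1, hlj⟩ (Fin.ext rfl)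
      rw [he]; simp only [dif_neg hnl, mul_zero]
    have hterm : ∀ l : Fin j, (Qhᵀ * Q) i (g l) * e (g l) = M ⟨i.1, hi⟩ l * y l := by
      intro l
      have h1 : e (g l) = y l := by rw [he]; simp only [hg]; rw [dif_pos l.2]
      have h2 : (Qhᵀ * Q) i (g l) = M ⟨i.1, hi⟩ l := by
        rw [hM, Matrix.of_apply]
      rw [h1, h2]
    have : z i = (M *ᵥ y) ⟨i.1, hi⟩ := by
      rw [hzi]
      show ∑ l, (Qhᵀ * Q) i l * e l = ∑ l, M ⟨i.1, hi⟩ l * y l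
      rw [hsum]
      exact Finset.sum_congr rfl fun l _ => hterm l
    rw [this, hMy]; rfl
  have hxS : x ⬝ᵥ (S *ᵥ x) = ∑ i, lam (i.1 + 1) * e i ^ 2 := by
    rw [hS, quadform hQ, hQtx]
  have hxSh : x ⬝ᵥ (Sh *ᵥ x) = ∑ i, lamh (i.1 + 1) * z i ^ 2 := by
    rw [hSh, quadform hQh]
  have hxx : ∑ i, x i ^ 2 = n2 := by
    have := coordsum hQ x
    rw [hQtx] at this
    rw [← this, hn2def]
  have hzz : ∑ i, z i ^ 2 = n2 := by
    have := coordsum hQh x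
    rw [← hz] at this
    rw [this, hxx]
  have hlow : lam j * n2 ≤ ∑ i, lam (i.1 + 1) * e i ^ 2 := by
    rw [hn2def, Finset.mul_sum]
    apply Finset.sum_le_sum
    intro i _
    by_cases h : i.1 < j
    · exact mul_le_mul_of_nonneg_right (hmono (i.1 + 1) j (by omega) (by omega) hjp)
        (sq_nonneg _)
    · rw [he]; simp [dif_neg h]
  have hhigh : ∑ i, lamh (i.1 + 1) * z i ^ 2 ≤ lamh j * n2 := by
    rw [← hzz, Finset.mul_sum]
    apply Finset.sum_le_sum
    intro i _
    by_cases h : i.1 < j - 1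
    · rw [hzlow i h]; simp
    · exact mul_le_mul_of_nonneg_right (hmonoh j (i.1 + 1) hj1 (by omega) (by omega))
        (sq_nonneg _)
  have hE : |x ⬝ᵥ ((Sh - S) *ᵥ x)| ≤ opNorm (Sh - S) * n2 := by
    have := dot_bound (Sh - S) x
    rwa [hxx] at this
  have hsplit : x ⬝ᵥ (Sh *ᵥ x) = x ⬝ᵥ (S *ᵥ x) + x ⬝ᵥ ((Sh - S) *ᵥ x) := by
    rw [Matrix.sub_mulVec, dotProduct_sub]; ring
  have key : lam j * n2 ≤ (lamh j + opNorm (Sh - S)) * n2 := by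
    have h1 : lam j * n2 ≤ x ⬝ᵥ (S *ᵥ x) := hxS ▸ hlow
    have h2 : x ⬝ᵥ (Sh *ᵥ x) ≤ lamh j * n2 := hxSh ▸ hhigh
    have h3 := abs_le.mp hE
    nlinarith [h3.1, h3.2]
  exact le_of_mul_le_mul_right key hn2

lemma weyl_abs (p j : ℕ) (hj1 : 1 ≤ j) (hjp : j ≤ p)
    (lam lamh : ℕ → ℝ)
    (hmono : ∀ i j, 1 ≤ i → i ≤ j → j ≤ p → lam j ≤ lam i)
    (hmonoh : ∀ i j, 1 ≤ i → i ≤ j → j ≤ p → lamh j ≤ lamh i)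
    (S Sh : Matrix (Fin p) (Fin p) ℝ)
    (hSspec : ∃ Q : Matrix (Fin p) (Fin p) ℝ, Qᵀ * Q = 1 ∧
      S = Q * Matrix.diagonal (fun i : Fin p => lam (i.1 + 1)) * Qᵀ)
    (hShspec : ∃ Q : Matrix (Fin p) (Fin p) ℝ, Qᵀ * Q = 1 ∧
      Sh = Q * Matrix.diagonal (fun i : Fin p => lamh (i.1 + 1)) * Qᵀ) :
    |lamh j - lam j| ≤ opNorm (Sh - S) := by
  have h1 := weyl_le p j hj1 hjp lam lamh hmono hmonoh S Sh hSspec hShspec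
  have h2 := weyl_le p j hj1 hjp lamh lam hmonoh hmono Sh S hShspec hSspec
  rw [opNorm_sub_comm] at h2
  rw [abs_sub_le_iff]
  constructor <;> linarith

theorem stmt3
    (p j : ℕ) (hj1 : 1 ≤ j) (hjp : j ≤ p)
    (lam lamh : ℕ → ℝ)
    (hmono : ∀ i j, 1 ≤ i → i ≤ j → j ≤ p → lam j ≤ lam i)
    (hmonoh : ∀ i j, 1 ≤ i → i ≤ j → j ≤ p → lamh j ≤ lamh i)
    (S Sh : Matrix (Fin p) (Fin p) ℝ) (hSsymm : S.IsSymm) (hShsymm : Sh.IsSymm)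
    (hSspec : ∃ Q : Matrix (Fin p) (Fin p) ℝ, Qᵀ * Q = 1 ∧
      S = Q * Matrix.diagonal (fun i : Fin p => lam (i.1 + 1)) * Qᵀ)
    (hShspec : ∃ Q : Matrix (Fin p) (Fin p) ℝ, Qᵀ * Q = 1 ∧
      Sh = Q * Matrix.diagonal (fun i : Fin p => lamh (i.1 + 1)) * Qᵀ)
    (δ : ℝ) (hδ : 0 < δ)
    (hgapl : 1 < j → δ ≤ lam (j - 1) - lam j)
    (hgapu : j < p → δ ≤ lam j - lam (j + 1))
    (v vh : Fin p → ℝ) (hv : ∑ i, (v i) ^ 2 = 1) (hvh : ∑ i, (vh i) ^ 2 = 1)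
    (hveig : S.mulVec v = lam j • v) (hvheig : Sh.mulVec vh = lamh j • vh) :
    Real.sqrt (1 - (∑ i, vh i * v i) ^ 2) ≤ 2 * opNorm (Sh - S) / δ := by
  obtain ⟨Q, hQ, hS⟩ := hSspec
  set ε := opNorm (Sh - S) with hε
  have hε0 : 0 ≤ ε := opNorm_nonneg _
  have hwy : |lamh j - lam j| ≤ ε := weyl_abs p j hj1 hjp lam lamh hmono hmonoh S Sh
    ⟨Q, hQ, hS⟩ hShspec
  set j0 : Fin p := ⟨j - 1, by omega⟩ with hj0
  set a := Qᵀ *ᵥ vh with ha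
  set b := Qᵀ *ᵥ v with hb
  have hsa : ∑ i, a i ^ 2 = 1 := by rw [ha, coordsum hQ, hvh]
  have hsb : ∑ i, b i ^ 2 = 1 := by rw [hb, coordsum hQ, hv]
  have hc : a ⬝ᵥ b = ∑ i, vh i * v i := by rw [ha, hb, coorddot hQ]; rfl
  -- b is supported at j0
  have h1 : Qᵀ *ᵥ (S *ᵥ v) = fun i => lam (i.1 + 1) * b i := by
    rw [hS]; exact coord_eig hQ _ v
  have h3 : (fun i : Fin p => lam (i.1 + 1) * b i) = lam j • b := by
    rw [← h1, hveig, Matrix.mulVec_smul]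
  have hbzero : ∀ i : Fin p, i ≠ j0 → b i = 0 := by
    intro i hi
    have h4 : lam (i.1 + 1) * b i = lam j * b i := by
      have := congrFun h3 i
      simpa using this
    by_contra hbne
    have h5 : lam (i.1 + 1) = lam j := mul_right_cancel₀ hbne h4
    have hine : i.1 ≠ j - 1 := fun hv' => hi (Fin.ext hv')
    rcases lt_or_gt_of_ne hine with hlt | hgt
    · have hlow : lam (j - 1) ≤ lam (i.1 + 1) := hmono (i.1 + 1) (j - 1) (by omega) (by omega) (by omega)
      have := hgapl (by omega)
      linarith
    · have hhigh : lam (i.1 + 1) ≤ lam (j + 1) := hmono (j + 1) (i.1 + 1) (by omega) (by omega) (by omega)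
      have := hgapu (by omega)
      linarith
  have hbj2 : b j0 ^ 2 = 1 := by
    rw [← hsb]
    exact (Finset.sum_eq_single_of_mem (f := fun i => b i ^ 2) j0 (Finset.mem_univ _)
      (fun i _ hi => by show b i ^ 2 = 0; rw [hbzero i hi]; ring)).symm
  have hcval : (∑ i, vh i * v i) = a j0 * b j0 := by
    rw [← hc]
    show ∑ i, a i * b i = a j0 * b j0
    exact Finset.sum_eq_single_of_mem (f := fun i => a i * b i) j0 (Finset.mem_univ _)
      (fun i _ hi => by show a i * b i = 0; rw [hbzero i hi]; ring)
  have hc2 : (∑ i, vh i * v i) ^ 2 = a j0 ^ 2 := by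
    rw [hcval, mul_pow, hbj2, mul_one]
  -- residual bound
  have hkey : ∑ i, (lam (i.1 + 1) - lamh j) ^ 2 * a i ^ 2 ≤ ε ^ 2 := by
    set w := S *ᵥ vh - lamh j • vh with hwdef
    have hw1 : w = (S - Sh) *ᵥ vh := by
      rw [hwdef, Matrix.sub_mulVec, hvheig]
    have hw2 : Real.sqrt (∑ i, w i ^ 2) ≤ ε := by
      rw [hw1]
      have := normA (S - Sh) vh
      rwa [hvh, Real.sqrt_one, mul_one, opNorm_sub_comm, ← hε] at this
    have hw3 : ∑ i, w i ^ 2 ≤ ε ^ 2 := by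
      have hnn : 0 ≤ ∑ i, w i ^ 2 := Finset.sum_nonneg fun i _ => sq_nonneg _
      nlinarith [Real.sq_sqrt hnn, Real.sqrt_nonneg (∑ i, w i ^ 2)]
    have hcoord : Qᵀ *ᵥ w = fun i => (lam (i.1 + 1) - lamh j) * a i := by
      rw [hwdef, Matrix.mulVec_sub, Matrix.mulVec_smul, hS, coord_eig hQ]
      funext i
      simp only [Pi.sub_apply, Pi.smul_apply, smul_eq_mul, ← ha]
      ring
    have hsumw : ∑ i, (Qᵀ *ᵥ w) i ^ 2 = ∑ i, w i ^ 2 := coordsum hQ w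
    rw [hcoord] at hsumw
    calc ∑ i, (lam (i.1 + 1) - lamh j) ^ 2 * a i ^ 2
        = ∑ i, ((lam (i.1 + 1) - lamh j) * a i) ^ 2 := by
          apply Finset.sum_congr rfl; intro i _; ring
      _ = ∑ i, w i ^ 2 := hsumw
      _ ≤ ε ^ 2 := hw3
  by_cases hcase : δ ≤ 2 * ε
  · have h1' : Real.sqrt (1 - (∑ i, vh i * v i) ^ 2) ≤ 1 :=
      Real.sqrt_le_one.mpr (by nlinarith [sq_nonneg (∑ i, vh i * v i)])
    have h2' : (1 : ℝ) ≤ 2 * ε / δ := by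
      rw [le_div_iff₀ hδ]; linarith
    linarith
  · push_neg at hcase
    have hde : δ / 2 ≤ δ - ε := by linarith
    have gap : ∀ i : Fin p, i ≠ j0 → (δ - ε) ≤ |lam (i.1 + 1) - lamh j| := by
      intro i hi
      have hgap : δ ≤ |lam (i.1 + 1) - lam j| := by
        have hine : i.1 ≠ j - 1 := fun hv' => hi (Fin.ext hv')
        rcases lt_or_gt_of_ne hine with hlt | hgt
        · have hlow : lam (j - 1) ≤ lam (i.1 + 1) := hmono (i.1 + 1) (j - 1) (by omega) (by omega) (by omega)
          have := hgapl (by omega)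
          rw [le_abs]; left; linarith
        · have hhigh : lam (i.1 + 1) ≤ lam (j + 1) := hmono (j + 1) (i.1 + 1) (by omega) (by omega) (by omega)
          have := hgapu (by omega)
          rw [le_abs]; right; linarith
      have htri : |lam (i.1 + 1) - lam j| - |lamh j - lam j| ≤ |lam (i.1 + 1) - lamh j| := by
        have := abs_sub_abs_le_abs_sub (lam (i.1 + 1) - lam j) (lamh j - lam j)
        have heq : (lam (i.1 + 1) - lam j) - (lamh j - lam j) = lam (i.1 + 1) - lamh j := by ring
        rwa [heq] at this
      linarith
    have hrest : (δ - ε) ^ 2 * (1 - (∑ i, vh i * v i) ^ 2) ≤ ε ^ 2 := by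
      have hsplit : 1 - (∑ i, vh i * v i) ^ 2 = ∑ i ∈ Finset.univ.erase j0, a i ^ 2 := by
        rw [hc2, ← hsa, ← Finset.add_sum_erase _ _ (Finset.mem_univ j0)]
        ring
      rw [hsplit, Finset.mul_sum]
      calc ∑ i ∈ Finset.univ.erase j0, (δ - ε) ^ 2 * a i ^ 2
          ≤ ∑ i ∈ Finset.univ.erase j0, (lam (i.1 + 1) - lamh j) ^ 2 * a i ^ 2 := by
            apply Finset.sum_le_sum
            intro i hi
            have hi' : i ≠ j0 := Finset.ne_of_mem_erase hi
            have hg := gap i hi'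
            have h := pow_le_pow_left₀ (by linarith) hg 2
            rw [sq_abs] at h
            exact mul_le_mul_of_nonneg_right h (sq_nonneg _)
        _ ≤ ∑ i, (lam (i.1 + 1) - lamh j) ^ 2 * a i ^ 2 := by
            apply Finset.sum_le_sum_of_subset_of_nonneg (Finset.subset_univ _)
            intro i _ _
            positivity
        _ ≤ ε ^ 2 := hkey
    have ht0 : 0 ≤ 1 - (∑ i, vh i * v i) ^ 2 := by
      rw [hc2, ← hsa]
      have := Finset.single_le_sum (f := fun i => a i ^ 2) (fun i _ => sq_nonneg _)
        (Finset.mem_univ j0)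
      linarith
    have hfinal : 1 - (∑ i, vh i * v i) ^ 2 ≤ (2 * ε / δ) ^ 2 := by
      have hq : (δ / 2) ^ 2 ≤ (δ - ε) ^ 2 := pow_le_pow_left₀ (by positivity) hde 2
      rw [div_pow]
      rw [le_div_iff₀ (by positivity)]
      nlinarith [mul_le_mul_of_nonneg_right hq ht0, hrest]
    calc Real.sqrt (1 - (∑ i, vh i * v i) ^ 2) ≤ Real.sqrt ((2 * ε / δ) ^ 2) :=
        Real.sqrt_le_sqrt hfinal
      _ = 2 * ε / δ := Real.sqrt_sq (by positivity)
end

section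
/- Let V, V̂ ∈ ℝ^{p×d} both have orthonormal columns. Then there exists an orthogonal matrix Ô ∈ ℝ^{d×d} such that ‖V̂Ô − V‖_F² ≤ 2 (d − ‖V̂ᵀV‖_F²). -/
open Matrix

lemma frobNorm_sq {m n : Type*} [Fintype m] [Fintype n] (A : Matrix m n ℝ) :
    frobNorm A ^ 2 = Matrix.trace (Aᵀ * A) := by
  rw [frobNorm, Real.sq_sqrt (by positivity)]
  simp only [Matrix.trace, Matrix.diag, Matrix.mul_apply, Matrix.transpose_apply]
  rw [Finset.sum_comm]
  simp [sq]

lemma orth_compact (d : ℕ) : IsCompact {O : Matrix (Fin d) (Fin d) ℝ | Oᵀ * O = 1} := by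
  have hclosed : IsClosed {O : Matrix (Fin d) (Fin d) ℝ | Oᵀ * O = 1} :=
    isClosed_eq ((continuous_id.matrix_transpose).matrix_mul continuous_id) continuous_const
  have hbig : IsCompact (Set.univ.pi (fun _ : Fin d => Set.univ.pi fun _ : Fin d => Set.Icc (-1:ℝ) 1) : Set (Matrix (Fin d) (Fin d) ℝ)) :=
    isCompact_univ_pi fun _ => isCompact_univ_pi fun _ => isCompact_Icc
  refine hbig.of_isClosed_subset hclosed ?_
  intro O hO i _ j _
  have hcol : ∑ k, O k j * O k j = 1 := by
    have h2 := congrFun (congrFun hO j) j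
    have h3 : (1 : Matrix (Fin d) (Fin d) ℝ) j j = 1 := by simp
    exact h2.trans h3
  have h1 : O i j ^ 2 ≤ 1 := by
    rw [← hcol]
    have : ∀ k ∈ Finset.univ, (0:ℝ) ≤ O k j * O k j := fun k _ => mul_self_nonneg _
    calc O i j ^ 2 = O i j * O i j := sq (O i j) ▸ (sq (O i j)).symm ▸ (pow_two (O i j))
    _ ≤ ∑ k, O k j * O k j := Finset.single_le_sum this (Finset.mem_univ i)
  constructor
  · nlinarith [h1]
  · nlinarith [h1]

lemma exists_max (d : ℕ) (M : Matrix (Fin d) (Fin d) ℝ) :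
    ∃ O ∈ {O : Matrix (Fin d) (Fin d) ℝ | Oᵀ * O = 1},
      ∀ N ∈ {O : Matrix (Fin d) (Fin d) ℝ | Oᵀ * O = 1},
        trace (Nᵀ * M) ≤ trace (Oᵀ * M) := by
  have hne : ({O : Matrix (Fin d) (Fin d) ℝ | Oᵀ * O = 1}).Nonempty :=
    ⟨1, by simp⟩
  have hcont : Continuous fun O : Matrix (Fin d) (Fin d) ℝ => trace (Oᵀ * M) :=
    ((continuous_id.matrix_transpose).matrix_mul continuous_const).matrix_trace
  obtain ⟨O, hO, hmax⟩ := (orth_compact d).exists_isMaxOn hne hcont.continuousOn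
  exact ⟨O, hO, fun N hN => hmax hN⟩

lemma trace_vecMulVec_mul (d : ℕ) (v : Fin d → ℝ) (A : Matrix (Fin d) (Fin d) ℝ) :
    trace (vecMulVec v v * A) = v ⬝ᵥ (A *ᵥ v) := by
  simp only [trace, diag, mul_apply, vecMulVec_apply, dotProduct, mulVec]
  rw [Finset.sum_comm]
  refine Finset.sum_congr rfl fun k _ => ?_
  rw [Finset.mul_sum]
  exact Finset.sum_congr rfl fun a _ => by ring

lemma vecMulVec_transpose' (d : ℕ) (v w : Fin d → ℝ) :
    (vecMulVec v w)ᵀ = vecMulVec w v := by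
  ext i j; simp [vecMulVec_apply, mul_comm]

lemma vecMulVec_mul_vecMulVec (d : ℕ) (v : Fin d → ℝ) (hv : v ⬝ᵥ v = 1) :
    vecMulVec v v * vecMulVec v v = vecMulVec v v := by
  ext i j
  simp only [mul_apply, vecMulVec_apply]
  have : ∑ k, v i * v k * (v k * v j) = (v i * v j) * (v ⬝ᵥ v) := by
    simp only [dotProduct]
    rw [Finset.mul_sum]
    exact Finset.sum_congr rfl fun k _ => by ring
  rw [this, hv, mul_one]

lemma refl_quad (d : ℕ) (A : Matrix (Fin d) (Fin d) ℝ)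
    (h : ∀ N : Matrix (Fin d) (Fin d) ℝ, Nᵀ * N = 1 → trace (N * A) ≤ trace A)
    (x : Fin d → ℝ) : 0 ≤ x ⬝ᵥ (A *ᵥ x) := by
  have key : ∀ v : Fin d → ℝ, v ⬝ᵥ v = 1 → 0 ≤ v ⬝ᵥ (A *ᵥ v) := by
    intro v hv
    set P : Matrix (Fin d) (Fin d) ℝ := vecMulVec v v with hPdef
    have hP : P * P = P := vecMulVec_mul_vecMulVec d v hv
    set N : Matrix (Fin d) (Fin d) ℝ := 1 - P - P with hN
    have hNt : Nᵀ = N := by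
      rw [hN, transpose_sub, transpose_sub, transpose_one, hPdef, vecMulVec_transpose']
    have hNN : Nᵀ * N = 1 := by
      rw [hNt, hN]
      simp only [Matrix.sub_mul, Matrix.mul_sub, Matrix.one_mul, Matrix.mul_one, hP]
      abel
    have hle := h N hNN
    rw [hN, Matrix.sub_mul, Matrix.sub_mul, Matrix.one_mul, trace_sub, trace_sub,
      hPdef, trace_vecMulVec_mul] at hle
    linarith
  rcases eq_or_ne x 0 with rfl | hx
  · simp
  · have hxx : 0 < x ⬝ᵥ x := by
      have e : x ⬝ᵥ x = ∑ i, x i ^ 2 := by simp [dotProduct, sq]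
      rw [e]
      have hex : ∃ i, x i ≠ 0 := by
        by_contra hc
        push_neg at hc
        exact hx (funext hc)
      obtain ⟨i, hi⟩ := hex
      exact Finset.sum_pos' (fun j _ => sq_nonneg _) ⟨i, Finset.mem_univ i, by positivity⟩
    set c : ℝ := Real.sqrt (x ⬝ᵥ x) with hc
    have hcpos : 0 < c := Real.sqrt_pos.mpr hxx
    have hcc : c * c = x ⬝ᵥ x := Real.mul_self_sqrt hxx.le
    have hq : (c⁻¹ • x) ⬝ᵥ (A *ᵥ (c⁻¹ • x)) = c⁻¹ * (c⁻¹ * (x ⬝ᵥ (A *ᵥ x))) := by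
      rw [smul_dotProduct, mulVec_smul, dotProduct_smul, smul_eq_mul, smul_eq_mul]
    have hv : (c⁻¹ • x) ⬝ᵥ (c⁻¹ • x) = 1 := by
      rw [smul_dotProduct, dotProduct_smul, smul_eq_mul, smul_eq_mul, ← hcc]
      field_simp
    have h0 := key (c⁻¹ • x) hv
    rw [hq] at h0
    have : x ⬝ᵥ (A *ᵥ x) = (c * c) * (c⁻¹ * (c⁻¹ * (x ⬝ᵥ (A *ᵥ x)))) := by
      field_simp
    rw [this]
    exact mul_nonneg (by positivity) h0

lemma stdBasis_transpose (d : ℕ) (a b : Fin d) :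
    (Matrix.single a b (1:ℝ))ᵀ = Matrix.single b a 1 := by
  ext x y
  simp only [transpose_apply, Matrix.single, of_apply]
  by_cases h1 : a = y <;> by_cases h2 : b = x <;> simp [h1, h2]

lemma trace_stdBasis_mul (d : ℕ) (i j : Fin d) (A : Matrix (Fin d) (Fin d) ℝ) :
    trace (Matrix.single i j (1:ℝ) * A) = A j i := by
  rw [trace]
  rw [Finset.sum_eq_single i]
  · simp [diag]
  · intro b _ hb
    simp [diag, Matrix.single_mul_apply_of_ne (c := (1:ℝ)) i j b b hb]
  · simp

set_option maxHeartbeats 1200000 in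
lemma givens_symm (d : ℕ) (A : Matrix (Fin d) (Fin d) ℝ)
    (h : ∀ N : Matrix (Fin d) (Fin d) ℝ, Nᵀ * N = 1 → trace (N * A) ≤ trace A)
    (hquad : ∀ x : Fin d → ℝ, 0 ≤ x ⬝ᵥ (A *ᵥ x)) : Aᵀ = A := by
  ext j i
  rw [transpose_apply]
  rcases eq_or_ne i j with rfl | hij
  · rfl
  obtain ⟨P, hP⟩ : ∃ P : Matrix (Fin d) (Fin d) ℝ, P = Matrix.single i i 1 + Matrix.single j j 1 := ⟨_, rfl⟩
  obtain ⟨K, hK⟩ : ∃ K : Matrix (Fin d) (Fin d) ℝ, K = Matrix.single j i 1 - Matrix.single i j 1 := ⟨_, rfl⟩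
  have hPt : Pᵀ = P := by
    rw [hP, transpose_add, stdBasis_transpose, stdBasis_transpose]
  have hKt : Kᵀ = -K := by
    rw [hK, transpose_sub, stdBasis_transpose, stdBasis_transpose, neg_sub]
  have hPP : P * P = P := by
    rw [hP]
    simp only [add_mul, mul_add, single_mul_single_same, one_mul,
      single_mul_single_of_ne, hij, hij.symm, ne_eq, not_false_eq_true]
    abel
  have hKK : K * K = -P := by
    rw [hK, hP]
    simp only [sub_mul, mul_sub, single_mul_single_same, one_mul,
      single_mul_single_of_ne, hij, hij.symm, ne_eq, not_false_eq_true]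
    abel
  have hPK : P * K = K := by
    rw [hK, hP]
    simp only [add_mul, mul_sub, sub_mul, mul_add, single_mul_single_same, one_mul,
      single_mul_single_of_ne, hij, hij.symm, ne_eq, not_false_eq_true]
    abel
  have hKP : K * P = K := by
    rw [hK, hP]
    simp only [add_mul, mul_sub, sub_mul, mul_add, single_mul_single_same, one_mul,
      single_mul_single_of_ne, hij, hij.symm, ne_eq, not_false_eq_true]
    abel
  have htP : trace (P * A) = A i i + A j j := by
    rw [hP, Matrix.add_mul, trace_add, trace_stdBasis_mul, trace_stdBasis_mul]
  have htK : trace (K * A) = A i j - A j i := by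
    rw [hK, Matrix.sub_mul, trace_sub, trace_stdBasis_mul, trace_stdBasis_mul]
  have hineq : ∀ θ : ℝ, (Real.cos θ - 1) * (A i i + A j j) + Real.sin θ * (A i j - A j i) ≤ 0 := by
    intro θ
    obtain ⟨a, ha⟩ : ∃ a : ℝ, a = Real.cos θ - 1 := ⟨_, rfl⟩
    obtain ⟨s, hs⟩ : ∃ s : ℝ, s = Real.sin θ := ⟨_, rfl⟩
    obtain ⟨G, hG⟩ : ∃ G : Matrix (Fin d) (Fin d) ℝ, G = 1 + a • P + s • K := ⟨_, rfl⟩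
    rw [show Real.cos θ - 1 = a from ha.symm, show Real.sin θ = s from hs.symm]
    have hGt : Gᵀ = 1 + a • P - s • K := by
      rw [hG, transpose_add, transpose_add, transpose_one, transpose_smul, transpose_smul,
        hPt, hKt, smul_neg]
      abel
    have hPG : P * G = P + a • P + s • K := by
      rw [hG, Matrix.mul_add, Matrix.mul_add, Matrix.mul_one, Matrix.mul_smul, Matrix.mul_smul,
        hPP, hPK]
    have hKG : K * G = K + a • K - s • P := by
      rw [hG, Matrix.mul_add, Matrix.mul_add, Matrix.mul_one, Matrix.mul_smul, Matrix.mul_smul,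
        hKP, hKK, smul_neg]
      abel
    have hcoef : a * a + 2 * a + s * s = 0 := by
      rw [ha, hs]
      nlinarith [Real.sin_sq_add_cos_sq θ]
    have hGG : Gᵀ * G = 1 := by
      rw [hGt, Matrix.sub_mul, Matrix.add_mul, Matrix.one_mul, Matrix.smul_mul, Matrix.smul_mul,
        hPG, hKG, hG]
      have e : (1 : Matrix (Fin d) (Fin d) ℝ) + a • P + s • K + a • (P + a • P + s • K)
          - s • (K + a • K - s • P) = 1 + (a * a + 2 * a + s * s) • P := by
        module
      rw [e, hcoef, zero_smul, add_zero]
    have hle := h G hGG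
    rw [hG, Matrix.add_mul, Matrix.add_mul, Matrix.one_mul, Matrix.smul_mul, Matrix.smul_mul,
      trace_add, trace_add, trace_smul, trace_smul, htP, htK] at hle
    simp only [smul_eq_mul] at hle
    linarith
  obtain ⟨s0, hs0d⟩ : ∃ x : ℝ, x = A i i + A j j := ⟨_, rfl⟩
  obtain ⟨c0, hc0d⟩ : ∃ x : ℝ, x = A i j - A j i := ⟨_, rfl⟩
  have hineq' : ∀ θ : ℝ, (Real.cos θ - 1) * s0 + Real.sin θ * c0 ≤ 0 := by
    intro θ; rw [hs0d, hc0d]; exact hineq θ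
  have hs0nn : 0 ≤ s0 := by
    rw [hs0d]
    have h1 : 0 ≤ A i i := by
      have := hquad (Pi.single i 1)
      simpa [dotProduct, mulVec, Pi.single_apply, Finset.mul_sum] using this
    have h2 : 0 ≤ A j j := by
      have := hquad (Pi.single j 1)
      simpa [dotProduct, mulVec, Pi.single_apply, Finset.mul_sum] using this
    linarith
  have hc0z : c0 = 0 := by
    rcases eq_or_lt_of_le (by positivity : (0:ℝ) ≤ s0^2 + c0^2) with hR0 | hRpos
    · nlinarith [sq_nonneg s0, sq_nonneg c0]
    · obtain ⟨R, hR⟩ : ∃ R : ℝ, R = Real.sqrt (s0^2 + c0^2) := ⟨_, rfl⟩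
      have hRp : 0 < R := hR ▸ Real.sqrt_pos.mpr hRpos
      have hRR : R^2 = s0^2 + c0^2 := by rw [hR]; exact Real.sq_sqrt hRpos.le
      have hbound : |s0 / R| ≤ 1 := by
        rw [abs_div, abs_of_pos hRp, div_le_one hRp]
        have h2 : |s0| ^ 2 ≤ R ^2 := by rw [hRR, sq_abs]; nlinarith [sq_nonneg c0]
        nlinarith [abs_nonneg s0, hRp]
      obtain ⟨θ, hcos, hsin⟩ : ∃ θ : ℝ, Real.cos θ = s0 / R ∧ Real.sin θ = c0 / R := by
        rcases le_or_gt 0 c0 with hc | hc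
        · refine ⟨Real.arccos (s0 / R), Real.cos_arccos (by linarith [abs_le.mp hbound |>.1]) (by linarith [abs_le.mp hbound |>.2]), ?_⟩
          rw [Real.sin_arccos]
          rw [show 1 - (s0/R)^2 = (c0/R)^2 by field_simp; nlinarith [hRR]]
          rw [Real.sqrt_sq (div_nonneg hc hRp.le)]
        · refine ⟨-Real.arccos (s0 / R), by rw [Real.cos_neg]; exact Real.cos_arccos (by linarith [abs_le.mp hbound |>.1]) (by linarith [abs_le.mp hbound |>.2]), ?_⟩
          rw [Real.sin_neg, Real.sin_arccos]
          rw [show 1 - (s0/R)^2 = (c0/R)^2 by field_simp; nlinarith [hRR]]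
          rw [show ((c0/R)^2 : ℝ) = ((-c0)/R)^2 by ring,
            Real.sqrt_sq (div_nonneg (neg_nonneg.mpr hc.le) hRp.le)]
          ring
      have hth := hineq' θ
      rw [hcos, hsin] at hth
      have h4 : R * ((s0/R - 1)*s0 + c0/R*c0) ≤ 0 :=
        mul_nonpos_of_nonneg_of_nonpos hRp.le hth
      have h5 : R * ((s0/R - 1)*s0 + c0/R*c0) = s0^2 + c0^2 - R*s0 := by
        field_simp
        ring
      have h6 : R^2 ≤ R * s0 := by rw [hRR]; linarith [h4, h5]
      have h7 : R ≤ s0 := by nlinarith [h6, hRp]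
      have h8 : c0^2 ≤ 0 := by nlinarith [mul_self_le_mul_self hRp.le h7, hRR]
      have h9 : c0^2 = 0 := le_antisymm h8 (sq_nonneg c0)
      exact pow_eq_zero_iff two_ne_zero |>.mp h9
  rw [hc0d] at hc0z
  linarith [hc0z]

lemma dot_pos_of_ne_zero (d : ℕ) (v : Fin d → ℝ) (hv : v ≠ 0) : 0 < v ⬝ᵥ v := by
  have e : v ⬝ᵥ v = ∑ i, v i ^ 2 := by simp [dotProduct, sq]
  rw [e]
  have hex : ∃ i, v i ≠ 0 := by
    by_contra hc; push_neg at hc; exact hv (funext hc)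
  obtain ⟨i, hi⟩ := hex
  exact Finset.sum_pos' (fun j _ => sq_nonneg _) ⟨i, Finset.mem_univ i, by positivity⟩

lemma trace_sq_le (d : ℕ) (A : Matrix (Fin d) (Fin d) ℝ)
    (hA : A.PosSemidef) (h1 : ((1 : Matrix (Fin d) (Fin d) ℝ) - A * A).PosSemidef) :
    trace (A * A) ≤ trace A := by
  have hH : A.IsHermitian := hA.1
  have hspec := hH.spectral_theorem
  rw [Unitary.conjStarAlgAut_apply] at hspec
  set U : Matrix (Fin d) (Fin d) ℝ := (hH.eigenvectorUnitary : Matrix (Fin d) (Fin d) ℝ) with hU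
  have hUU : star U * U = 1 := hH.eigenvectorUnitary.2.1
  set D : Matrix (Fin d) (Fin d) ℝ := diagonal (RCLike.ofReal ∘ hH.eigenvalues) with hD
  have htrA : trace A = ∑ i, hH.eigenvalues i := by
    calc trace A = trace (U * D * star U) := by rw [← hspec]
      _ = trace D := by rw [trace_mul_cycle, hUU, Matrix.one_mul]
      _ = ∑ i, hH.eigenvalues i := by rw [hD, trace_diagonal]; simp
  have htrAA : trace (A * A) = ∑ i, hH.eigenvalues i ^ 2 := by
    calc trace (A * A) = trace ((U * D * star U) * (U * D * star U)) := by rw [← hspec]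
      _ = trace (U * (D * (star U * U) * D) * star U) := by
          rw [show U * D * star U * (U * D * star U) = U * (D * (star U * U) * D) * star U by
            simp only [Matrix.mul_assoc]]
      _ = trace (D * D) := by
          rw [hUU, Matrix.mul_one, trace_mul_cycle, ← Matrix.mul_assoc, hUU, Matrix.one_mul]
      _ = ∑ i, hH.eigenvalues i ^ 2 := by
          rw [hD, diagonal_mul_diagonal, trace_diagonal]
          simp [sq]
  have hnn : ∀ i, 0 ≤ hH.eigenvalues i := fun i => hA.eigenvalues_nonneg i
  have hle1 : ∀ i, hH.eigenvalues i ≤ 1 := by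
    intro i
    set v : Fin d → ℝ := ⇑(hH.eigenvectorBasis i) with hv
    have hAv : A *ᵥ v = hH.eigenvalues i • v := hH.mulVec_eigenvectorBasis i
    have hvne : v ≠ 0 := by
      have := hH.eigenvectorBasis.orthonormal.ne_zero i
      intro hc
      apply this
      ext k
      exact congrFun hc k
    have hvv : 0 < v ⬝ᵥ v := dot_pos_of_ne_zero d v hvne
    have hq := (posSemidef_iff_dotProduct_mulVec.mp h1).2 v
    rw [sub_mulVec, Matrix.one_mulVec, ← Matrix.mulVec_mulVec, hAv, Matrix.mulVec_smul, hAv,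
      smul_smul, dotProduct_sub, dotProduct_smul, smul_eq_mul] at hq
    have hq2 : 0 ≤ (1 - hH.eigenvalues i * hH.eigenvalues i) * (v ⬝ᵥ v) := by
      have hstar : star v = v := by simp
      rw [hstar] at hq
      nlinarith [hq]
    have : hH.eigenvalues i * hH.eigenvalues i ≤ 1 := by nlinarith [hq2, hvv]
    nlinarith [hnn i, this]
  rw [htrA, htrAA]
  exact Finset.sum_le_sum fun i _ => by nlinarith [hnn i, hle1 i]

lemma key (d : ℕ) (M : Matrix (Fin d) (Fin d) ℝ)
    (hM : ((1 : Matrix (Fin d) (Fin d) ℝ) - Mᵀ * M).PosSemidef) :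
    ∃ O : Matrix (Fin d) (Fin d) ℝ, Oᵀ * O = 1 ∧ trace (Mᵀ * M) ≤ trace (Oᵀ * M) := by
  obtain ⟨O, hO, hmax⟩ := exists_max d M
  refine ⟨O, hO, ?_⟩
  obtain ⟨A, hAd⟩ : ∃ A : Matrix (Fin d) (Fin d) ℝ, A = Oᵀ * M := ⟨_, rfl⟩
  have hOOt : O * Oᵀ = 1 := mul_eq_one_comm.mp hO
  have hNprop : ∀ N : Matrix (Fin d) (Fin d) ℝ, Nᵀ * N = 1 → trace (N * A) ≤ trace A := by
    intro N hN
    have hmem : (O * Nᵀ)ᵀ * (O * Nᵀ) = 1 := by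
      rw [transpose_mul, transpose_transpose, Matrix.mul_assoc,
        show Oᵀ * (O * Nᵀ) = Oᵀ * O * Nᵀ from (Matrix.mul_assoc _ _ _).symm, hO,
        Matrix.one_mul]
      exact mul_eq_one_comm.mp hN
    have := hmax (O * Nᵀ) hmem
    rw [transpose_mul, transpose_transpose, Matrix.mul_assoc] at this
    rw [hAd, ← Matrix.mul_assoc]
    rw [← Matrix.mul_assoc] at this
    exact this
  have hquad := refl_quad d A hNprop
  have hsym := givens_symm d A hNprop hquad
  have hpsd : A.PosSemidef := by
    rw [posSemidef_iff_dotProduct_mulVec]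
    constructor
    · rw [IsHermitian, conjTranspose_eq_transpose_of_trivial, hsym]
    · intro x
      have hx : star x = x := by ext k; simp
      rw [hx]
      exact hquad x
  have hAA : A * A = Mᵀ * M := by
    have ht : Aᵀ = Mᵀ * O := by rw [hAd, transpose_mul, transpose_transpose]
    calc A * A = Aᵀ * A := by rw [hsym]
      _ = Mᵀ * O * (Oᵀ * M) := by rw [ht, hAd]
      _ = Mᵀ * (O * Oᵀ) * M := by simp only [Matrix.mul_assoc]
      _ = Mᵀ * M := by rw [hOOt, Matrix.mul_one]
  have h1A : ((1 : Matrix (Fin d) (Fin d) ℝ) - A * A).PosSemidef := by rw [hAA]; exact hM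
  have hfin := trace_sq_le d A hpsd h1A
  rw [hAA, hAd] at hfin
  exact hfin

theorem stmt13 (p d : ℕ) (V Vh : Matrix (Fin p) (Fin d) ℝ)
    (hV : Vᵀ * V = 1) (hVh : Vhᵀ * Vh = 1) :
    ∃ O : Matrix (Fin d) (Fin d) ℝ, Oᵀ * O = 1 ∧
      (frobNorm (Vh * O - V)) ^ 2 ≤ 2 * ((d : ℝ) - (frobNorm (Vhᵀ * V)) ^ 2) := by
  set M : Matrix (Fin d) (Fin d) ℝ := Vhᵀ * V with hMdef
  have hMt : Mᵀ = Vᵀ * Vh := by rw [hMdef, transpose_mul, transpose_transpose]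
  have hpsd : ((1 : Matrix (Fin d) (Fin d) ℝ) - Mᵀ * M).PosSemidef := by
    have e : (1 : Matrix (Fin d) (Fin d) ℝ) - Mᵀ * M = (V - Vh * M)ᵀ * (V - Vh * M) := by
      rw [transpose_sub, transpose_mul Vh M, Matrix.sub_mul, Matrix.mul_sub, Matrix.mul_sub,
        hV, show Vᵀ * (Vh * M) = Mᵀ * M by rw [← Matrix.mul_assoc, ← hMt],
        show Mᵀ * Vhᵀ * V = Mᵀ * M by rw [Matrix.mul_assoc, ← hMdef],
        show Mᵀ * Vhᵀ * (Vh * M) = Mᵀ * M by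
          rw [Matrix.mul_assoc, ← Matrix.mul_assoc Vhᵀ, hVh, Matrix.one_mul]]
      abel
    rw [e, ← conjTranspose_eq_transpose_of_trivial]
    exact posSemidef_conjTranspose_mul_self _
  obtain ⟨O, hO, ht⟩ := key d M hpsd
  refine ⟨O, hO, ?_⟩
  rw [frobNorm_sq, frobNorm_sq]
  have e1 : (Vh * O - V)ᵀ * (Vh * O - V) = 1 + 1 - Oᵀ * M - Mᵀ * O := by
    rw [transpose_sub, transpose_mul Vh O, Matrix.sub_mul, Matrix.mul_sub, Matrix.mul_sub,
      show Oᵀ * Vhᵀ * (Vh * O) = 1 by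
        rw [Matrix.mul_assoc, ← Matrix.mul_assoc Vhᵀ, hVh, Matrix.one_mul, hO],
      show Oᵀ * Vhᵀ * V = Oᵀ * M by rw [Matrix.mul_assoc, ← hMdef],
      show Vᵀ * (Vh * O) = Mᵀ * O by rw [← Matrix.mul_assoc, ← hMt], hV]
    abel
  rw [e1]
  have e2 : trace ((1 : Matrix (Fin d) (Fin d) ℝ) + 1 - Oᵀ * M - Mᵀ * O)
      = 2 * d - 2 * trace (Oᵀ * M) := by
    rw [trace_sub, trace_sub, trace_add, trace_one,
      show trace (Mᵀ * O) = trace (Oᵀ * M) by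
        rw [← trace_transpose, transpose_mul, transpose_transpose]]
    simp [Fintype.card_fin]
    ring
  rw [e2]
  linarith
end
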